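/- Let L be a finite field and let Ḡ be the subgroup of GL(2, L) generated by the matrix S₀ = [[0,1],[1,0]] together with all matrices [[1,b],[0,1]] with b ∈ L, b ≠ 0. Then the special linear group SL(2, L) = {A ∈ GL(2, L) : det A = 1} is a subgroup of Ḡ; moreover, if char(L) = 2, then Ḡ = SL(2, L). -/

import Mathlib

/-- The permutation matrix `S₀ = [[0,1],[1,0]]` as an element of `GL(2, L)`. -/
def swapGL (L : Type*) [Field L] : GL (Fin 2) L :=
  ⟨!![0, 1; 1, 0], !![0, 1; 1, 0],
    by simp [Matrix.mul_fin_two, Matrix.one_fin_two],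
    by simp [Matrix.mul_fin_two, Matrix.one_fin_two]⟩

/-- The transvection `[[1,b],[0,1]]` as an element of `GL(2, L)`. -/
def transvGL {L : Type*} [Field L] (b : L) : GL (Fin 2) L :=
  ⟨!![1, b; 0, 1], !![1, -b; 0, 1],
    by simp [Matrix.mul_fin_two, Matrix.one_fin_two],
    by simp [Matrix.mul_fin_two, Matrix.one_fin_two]⟩

/-- The subgroup `Ḡ ≤ GL(2, L)` generated by `S₀` and the transvections `[[1,b],[0,1]]`,
`b ≠ 0`. -/
def Gbar (L : Type*) [Field L] : Subgroup (GL (Fin 2) L) :=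
  Subgroup.closure ({swapGL L} ∪ {A | ∃ b : L, b ≠ 0 ∧ A = transvGL b})

/-- The special linear group `SL(2, L) = {A ∈ GL(2, L) : det A = 1}`, as a subgroup of
`GL(2, L)`. -/
def SL2 (L : Type*) [Field L] : Subgroup (GL (Fin 2) L) where
  carrier := {A | Matrix.det (A : Matrix (Fin 2) (Fin 2) L) = 1}
  one_mem' := by simp
  mul_mem' := by
    intro a b ha hb
    simp only [Set.mem_setOf_eq, Units.val_mul, Matrix.det_mul] at *
    rw [ha, hb, one_mul]
  inv_mem' := by
    intro A hA
    simp only [Set.mem_setOf_eq] at *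
    have h : Matrix.det ((A⁻¹ : GL (Fin 2) L) : Matrix (Fin 2) (Fin 2) L)
        * Matrix.det ((A : GL (Fin 2) L) : Matrix (Fin 2) (Fin 2) L) = 1 := by
      rw [← Matrix.det_mul, ← Units.val_mul, inv_mul_cancel A, Units.val_one, Matrix.det_one]
    rw [hA, mul_one] at h
    exact h


section Aux
variable {L : Type*} [Field L]

lemma transvGL_mem (b : L) : transvGL b ∈ Gbar L := by
  rcases eq_or_ne b 0 with h | h
  · have h1 : transvGL (0:L) = 1 := by
      apply Units.ext
      show !![(1:L), 0; 0, 1] = 1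
      rw [Matrix.one_fin_two]
    rw [h, h1]; exact one_mem _
  · exact Subgroup.subset_closure (Or.inr ⟨b, h, rfl⟩)

lemma swapGL_mem : swapGL L ∈ Gbar L := Subgroup.subset_closure (Or.inl rfl)

lemma mem_of_c_ne_zero (A : GL (Fin 2) L)
    (hdet : Matrix.det (A : Matrix (Fin 2) (Fin 2) L) = 1)
    (hc : (A : Matrix (Fin 2) (Fin 2) L) 1 0 ≠ 0) : A ∈ Gbar L := by
  set a := (A : Matrix (Fin 2) (Fin 2) L) 0 0 with ha
  set b := (A : Matrix (Fin 2) (Fin 2) L) 0 1 with hb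
  set c := (A : Matrix (Fin 2) (Fin 2) L) 1 0 with hcdef
  set d := (A : Matrix (Fin 2) (Fin 2) L) 1 1 with hd
  have hdet2 : a * d - b * c = 1 := by
    rw [← Matrix.det_fin_two]; exact hdet
  have key : A = transvGL ((a-1)/c) * swapGL L * transvGL c * swapGL L
      * transvGL ((d-1)/c) := by
    apply Units.ext
    show (A : Matrix (Fin 2) (Fin 2) L) = _
    rw [Matrix.eta_fin_two (A : Matrix (Fin 2) (Fin 2) L)]
    simp only [Units.val_mul, transvGL, swapGL, Matrix.mul_fin_two]
    rw [← ha, ← hb, ← hcdef, ← hd]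
    ext i j
    fin_cases i <;> fin_cases j <;>
      simp only [Fin.zero_eta, Fin.mk_one, Matrix.of_apply, Matrix.cons_val', Matrix.cons_val_zero,
        Matrix.cons_val_one, Matrix.empty_val', Matrix.cons_val_fin_one] <;> field_simp <;>
      first
        | linear_combination hdet2
        | linear_combination -hdet2
        | linear_combination c * hdet2
        | linear_combination -c * hdet2
        | linear_combination
  rw [key]
  exact mul_mem (mul_mem (mul_mem (mul_mem (transvGL_mem _) swapGL_mem)
    (transvGL_mem _)) swapGL_mem) (transvGL_mem _)

lemma mem_of_det_one (A : GL (Fin 2) L)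
    (hdet : Matrix.det (A : Matrix (Fin 2) (Fin 2) L) = 1) : A ∈ Gbar L := by
  by_cases hc : (A : Matrix (Fin 2) (Fin 2) L) 1 0 ≠ 0
  · exact mem_of_c_ne_zero A hdet hc
  push_neg at hc
  set F : GL (Fin 2) L := swapGL L * transvGL 1 * swapGL L with hF
  have hFmem : F ∈ Gbar L := mul_mem (mul_mem swapGL_mem (transvGL_mem 1)) swapGL_mem
  have hFval : (F : Matrix (Fin 2) (Fin 2) L) = !![1, 0; 1, 1] := by
    simp [hF, Units.val_mul, swapGL, transvGL, Matrix.mul_fin_two]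
  have hd : (A : Matrix (Fin 2) (Fin 2) L) 1 1 ≠ 0 := by
    intro h
    rw [Matrix.det_fin_two, hc, h] at hdet
    simp at hdet
  have h1 : A * F ∈ Gbar L := by
    apply mem_of_c_ne_zero
    · rw [Units.val_mul, Matrix.det_mul, hdet, hFval]
      simp [Matrix.det_fin_two]
    · rw [Units.val_mul, hFval, Matrix.mul_apply]
      simp [Fin.sum_univ_two, hc, hd]
  have h2 : A = (A * F) * F⁻¹ := by group
  rw [h2]
  exact mul_mem h1 (inv_mem hFmem)

end Aux

/-- For a finite field `L`, the special linear group `SL(2, L)` is a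
subgroup of `Ḡ`; moreover, if `char(L) = 2` then `Ḡ = SL(2, L)`. -/
theorem SL2_le_Gbar (L : Type*) [Field L] [Fintype L] :
    SL2 L ≤ Gbar L ∧ (ringChar L = 2 → Gbar L = SL2 L) := by
  have h1 : SL2 L ≤ Gbar L := fun A hA => mem_of_det_one A hA
  refine ⟨h1, fun hchar => le_antisymm ?_ h1⟩
  rw [Gbar, Subgroup.closure_le]
  rintro A (rfl | ⟨b, -, rfl⟩)
  · show Matrix.det ((swapGL L : GL (Fin 2) L) : Matrix (Fin 2) (Fin 2) L) = 1
    have h2 : (2 : L) = 0 := by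
      haveI : CharP L 2 := ringChar.eq_iff.mp hchar
      exact CharP.cast_eq_zero L 2
    show Matrix.det !![(0:L),1;1,0] = 1
    rw [Matrix.det_fin_two_of]
    linear_combination -h2
  · show Matrix.det !![(1:L),b;0,1] = 1
    simp [Matrix.det_fin_two_of]
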